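/- In the quasi-ordinary setup below, assume ∑_{i=1}^{m_1} a_{11i} = 1. Let c be the least positive integer such that d_j := c · a_{11j} is an integer for every 1 ≤ j ≤ m_1 (so a_{11j} = d_j/c and ∑_j d_j = c). Then there exists r_0 > 0 such that for all 0 < r ≤ r_0 the tangent cone of Y_r at 0 equals {(x, y) ∈ ℂ^n × ℂ : y^c − f_1(0)^c ∏_{j=1}^{m_1} x_{1j}^{d_j} = 0}, where x = (x_{kj})_{k,j}. -/

import Mathlib

open Filter Topology

noncomputable section

/-- The monomial `M_k(t) = ∏ t_{ij}^{b_{kij}}`. -/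
def qoMonom {g : ℕ} (m : Fin g → ℕ) (b : Fin g → ((k : Fin g) × Fin (m k)) → ℕ)
    (k : Fin g) (t : ((k : Fin g) × Fin (m k)) → ℂ) : ℂ :=
  ∏ p : (k : Fin g) × Fin (m k), t p ^ b k p

/-- `φ(t) = ∑ M_k(t) f_k(t)`. -/
def qoPhi {g : ℕ} (m : Fin g → ℕ) (b : Fin g → ((k : Fin g) × Fin (m k)) → ℕ)
    (f : Fin g → (((k : Fin g) × Fin (m k)) → ℂ) → ℂ)
    (t : ((k : Fin g) × Fin (m k)) → ℂ) : ℂ :=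
  ∑ k, qoMonom m b k t * f k t

/-- `ξ_{kj}(t) = (∂φ/∂t_{kj})(t) / (c_{kj} t_{kj}^{c_{kj}-1})`. -/
def qoXi {g : ℕ} (m : Fin g → ℕ) (b : Fin g → ((k : Fin g) × Fin (m k)) → ℕ)
    (c : ((k : Fin g) × Fin (m k)) → ℕ)
    (f : Fin g → (((k : Fin g) × Fin (m k)) → ℂ) → ℂ)
    (t : ((k : Fin g) × Fin (m k)) → ℂ) (p : (k : Fin g) × Fin (m k)) : ℂ :=
  fderiv ℂ (qoPhi m b f) t (Pi.single p 1) / ((c p : ℂ) * t p ^ (c p - 1))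

lemma qoVec_ne {g : ℕ} {m : Fin g → ℕ} (v : ((k : Fin g) × Fin (m k)) → ℂ) :
    ((v, (-1 : ℂ)) : (((k : Fin g) × Fin (m k)) → ℂ) × ℂ) ≠ 0 := by
  simp [Prod.ext_iff]

instance {K V : Type*} [DivisionRing K] [AddCommGroup V] [Module K V] [TopologicalSpace V] :
    TopologicalSpace (Projectivization K V) :=
  inferInstanceAs (TopologicalSpace (Quotient (projectivizationSetoid K V)))

/-- The projectivized tangent map `G`. -/
def qoG {g : ℕ} (m : Fin g → ℕ) (b : Fin g → ((k : Fin g) × Fin (m k)) → ℕ)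
    (c : ((k : Fin g) × Fin (m k)) → ℕ)
    (f : Fin g → (((k : Fin g) × Fin (m k)) → ℂ) → ℂ)
    (t : ((k : Fin g) × Fin (m k)) → ℂ) :
    Projectivization ℂ ((((k : Fin g) × Fin (m k)) → ℂ) × ℂ) :=
  Projectivization.mk ℂ (fun p => qoXi m b c f t p, -1) (qoVec_ne _)

/-- The set of limits of tangents `Λ`. -/
def qoLambda {g : ℕ} (m : Fin g → ℕ) (b : Fin g → ((k : Fin g) × Fin (m k)) → ℕ)
    (c : ((k : Fin g) × Fin (m k)) → ℕ)
    (f : Fin g → (((k : Fin g) × Fin (m k)) → ℂ) → ℂ) :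
    Set (Projectivization ℂ ((((k : Fin g) × Fin (m k)) → ℂ) × ℂ)) :=
  {ℓ | ∃ t : ℕ → ((k : Fin g) × Fin (m k)) → ℂ,
    (∀ n p, t n p ≠ 0) ∧ Tendsto t atTop (𝓝 0) ∧
    Tendsto (fun n => qoG m b c f (t n)) atTop (𝓝 ℓ)}

/-- The exponent `a_{kij} = b_{kij}/c_{ij}`. -/
def qoExp {g : ℕ} (m : Fin g → ℕ) (b : Fin g → ((k : Fin g) × Fin (m k)) → ℕ)
    (c : ((k : Fin g) × Fin (m k)) → ℕ)
    (k : Fin g) (p : (k : Fin g) × Fin (m k)) : ℚ :=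
  (b k p : ℚ) / (c p : ℚ)

/-- The image `Y_r` of the polydisc of radius `r` under `t ↦ ((t_{kj}^{c_{kj}})_{kj}, φ(t))`. -/
def qoY {g : ℕ} (m : Fin g → ℕ) (b : Fin g → ((k : Fin g) × Fin (m k)) → ℕ)
    (c : ((k : Fin g) × Fin (m k)) → ℕ)
    (f : Fin g → (((k : Fin g) × Fin (m k)) → ℂ) → ℂ) (r : ℝ) :
    Set ((((k : Fin g) × Fin (m k)) → ℂ) × ℂ) :=
  (fun t => (fun p => t p ^ c p, qoPhi m b f t)) '' {t | ∀ p, ‖t p‖ < r}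


-- ===================== auxiliary lemmas =====================

theorem my_finset_gcd_bezout {ι : Type*} [DecidableEq ι] (s : Finset ι) (f : ι → ℕ) :
    ∃ k : ι → ℤ, ∑ i ∈ s, k i * (f i : ℤ) = ((s.gcd f : ℕ) : ℤ) := by
  classical
  induction s using Finset.induction_on with
  | empty => exact ⟨0, by simp⟩
  | @insert a s ha ih =>
    obtain ⟨k, hk⟩ := ih
    refine ⟨fun i => if i = a then Nat.gcdA (f a) (s.gcd f) else Nat.gcdB (f a) (s.gcd f) * k i, ?_⟩
    rw [Finset.sum_insert ha, Finset.gcd_insert]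
    have h1 : ((gcd (f a) (s.gcd f) : ℕ) : ℤ) = ((Nat.gcd (f a) (s.gcd f) : ℕ) : ℤ) := by
      norm_cast
    rw [h1, Nat.gcd_eq_gcd_ab]
    simp only [if_pos rfl]
    rw [Finset.sum_congr rfl (fun i hi => by rw [if_neg (by rintro rfl; exact ha hi)])]
    have h2 : ∑ i ∈ s, Nat.gcdB (f a) (s.gcd f) * k i * (f i : ℤ)
        = Nat.gcdB (f a) (s.gcd f) * ∑ i ∈ s, k i * (f i : ℤ) := by
      rw [Finset.mul_sum]; exact Finset.sum_congr rfl fun i _ => by ring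
    rw [h2, hk]; simp only [if_true]; ring

theorem my_tendsto_zero_of_pow {x : ℕ → ℝ} (hx : ∀ n, 0 ≤ x n) {k : ℕ} (hk : 0 < k)
    (h : Tendsto (fun n => x n ^ k) atTop (𝓝 0)) : Tendsto x atTop (𝓝 0) := by
  have hkR : ((k : ℝ))⁻¹ ≠ 0 := by positivity
  have hcont : Tendsto (fun y : ℝ => y ^ ((k : ℝ))⁻¹) (𝓝 0) (𝓝 0) := by
    have := (Real.continuousAt_rpow_const 0 ((k : ℝ))⁻¹
      (Or.inr (by positivity))).tendsto
    simpa [Real.zero_rpow hkR] using this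
  have := hcont.comp h
  refine this.congr fun n => ?_
  rw [Function.comp_apply, ← Real.rpow_natCast (x n) k, ← Real.rpow_mul (hx n)]
  rw [mul_inv_cancel₀ (by positivity : (k:ℝ) ≠ 0), Real.rpow_one]

theorem my_roots_choice {M : ℕ} (c b d : Fin M → ℕ) (cd : ℕ) (hcd : 0 < cd)
    (hcpos : ∀ j, 0 < c j) (hbpos : ∀ j, 0 < b j) (hdpos : ∀ j, 0 < d j)
    (hrel : ∀ j, cd * b j = d j * c j) (hgcd : ∃ k : Fin M → ℤ, ∑ j, k j * (d j : ℤ) = 1)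
    (x : Fin M → ℂ) (y f0 : ℂ) (hf0 : f0 ≠ 0)
    (hy : y ^ cd = f0 ^ cd * ∏ j, x j ^ d j) :
    ∃ w : Fin M → ℂ, (∀ j, w j ^ c j = x j) ∧ f0 * ∏ j, w j ^ b j = y := by
  have hw : ∀ j, ∃ z : ℂ, z ^ c j = x j := fun j =>
    IsAlgClosed.exists_pow_nat_eq (x j) (hcpos j)
  choose w hwx using hw
  by_cases hx : ∃ j0, x j0 = 0
  · obtain ⟨j0, hj0⟩ := hx
    have hw0 : w j0 = 0 := by
      have := hwx j0; rw [hj0] at this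
      exact pow_eq_zero_iff (hcpos j0).ne' |>.1 this
    have hy0 : y = 0 := by
      have h1 : y ^ cd = 0 := by
        rw [hy, Finset.prod_eq_zero (Finset.mem_univ j0)
          (by rw [hj0, zero_pow (hdpos j0).ne']), mul_zero]
      exact pow_eq_zero_iff hcd.ne' |>.1 h1
    refine ⟨w, hwx, ?_⟩
    rw [Finset.prod_eq_zero (Finset.mem_univ j0)
      (by rw [hw0, zero_pow (hbpos j0).ne']), mul_zero, hy0]
  · push_neg at hx
    have hwne : ∀ j, w j ≠ 0 := by
      intro j h0
      exact hx j (by rw [← hwx j, h0, zero_pow (hcpos j).ne'])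
    set W : ℂ := ∏ j, w j ^ b j with hW
    have hWne : W ≠ 0 := Finset.prod_ne_zero_iff.2 fun j _ => pow_ne_zero _ (hwne j)
    have hWcd : W ^ cd = ∏ j, x j ^ d j := by
      rw [hW, ← Finset.prod_pow]
      refine Finset.prod_congr rfl fun j _ => ?_
      rw [← pow_mul, ← hwx j, ← pow_mul, mul_comm (b j) cd, hrel j, mul_comm (d j) (c j)]
    set ζ : ℂ := y / (f0 * W) with hζdef
    have hζ : ζ ^ cd = 1 := by
      have hne : f0 ^ cd * W ^ cd ≠ 0 := mul_ne_zero (pow_ne_zero _ hf0) (pow_ne_zero _ hWne)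
      rw [hζdef, div_pow, mul_pow, hy, hWcd]
      rw [hWcd] at hne
      exact div_self hne
    haveI : NeZero cd := ⟨hcd.ne'⟩
    obtain ⟨a, _, ha⟩ := (Complex.isPrimitiveRoot_exp cd hcd.ne').eq_pow_of_pow_eq_one hζ
    obtain ⟨k, hk⟩ := hgcd
    have hkC : ∑ j, (k j : ℂ) * (d j : ℂ) = 1 := by
      have := congrArg (Int.cast : ℤ → ℂ) hk
      push_cast at this
      exact this
    refine ⟨fun j => Complex.exp (2 * Real.pi * Complex.I * a * k j / c j) * w j, fun j => ?_, ?_⟩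
    · rw [mul_pow, ← Complex.exp_nat_mul, hwx j]
      have hcj : (c j : ℂ) ≠ 0 := Nat.cast_ne_zero.2 (hcpos j).ne'
      have : (c j : ℂ) * (2 * Real.pi * Complex.I * a * k j / c j)
          = ((a * k j : ℤ) : ℂ) * (2 * Real.pi * Complex.I) := by
        field_simp
        push_cast
        ring
      rw [this, Complex.exp_int_mul_two_pi_mul_I, one_mul]
    · have hprod : ∏ j, (Complex.exp (2 * Real.pi * Complex.I * a * k j / c j) * w j) ^ b j
          = Complex.exp (∑ j, (b j : ℂ) * (2 * Real.pi * Complex.I * a * k j / c j)) * W := by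
        rw [Complex.exp_sum, ← Finset.prod_mul_distrib]
        refine Finset.prod_congr rfl fun j _ => ?_
        rw [mul_pow, ← Complex.exp_nat_mul]
      rw [hprod]
      have hsum : ∑ j, (b j : ℂ) * (2 * Real.pi * Complex.I * a * k j / c j)
          = (a : ℂ) * (2 * Real.pi * Complex.I / cd) := by
        have hcdC : (cd : ℂ) ≠ 0 := Nat.cast_ne_zero.2 hcd.ne'
        have hstep : ∀ j, (b j : ℂ) * (2 * Real.pi * Complex.I * a * k j / c j)
            = (2 * Real.pi * Complex.I * a / cd) * ((k j : ℂ) * (d j : ℂ)) := by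
          intro j
          have hcj : (c j : ℂ) ≠ 0 := Nat.cast_ne_zero.2 (hcpos j).ne'
          have hrelC : (cd : ℂ) * (b j : ℂ) = (d j : ℂ) * (c j : ℂ) := by
            have := congrArg (Nat.cast : ℕ → ℂ) (hrel j)
            push_cast at this; exact this
          have hdiv : (b j : ℂ) / (c j : ℂ) = (d j : ℂ) / (cd : ℂ) := by
            rw [div_eq_div_iff hcj hcdC]; linear_combination hrelC
          calc (b j : ℂ) * (2 * Real.pi * Complex.I * a * k j / c j)
              = ((b j : ℂ) / (c j : ℂ)) * (2 * Real.pi * Complex.I * a * k j) := by ring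
            _ = ((d j : ℂ) / (cd : ℂ)) * (2 * Real.pi * Complex.I * a * k j) := by rw [hdiv]
            _ = (2 * Real.pi * Complex.I * a / cd) * ((k j : ℂ) * (d j : ℂ)) := by ring
        rw [Finset.sum_congr rfl fun j _ => hstep j, ← Finset.mul_sum, hkC, mul_one]
        ring
      rw [hsum, Complex.exp_nat_mul, ha, hζdef]
      field_simp

-- ===================== structural lemmas =====================

/-- `N_k(t) = M_k(t)/M_{k0}(t)` as a monomial. -/
def qoN {g : ℕ} (m : Fin g → ℕ) (b : Fin g → ((k : Fin g) × Fin (m k)) → ℕ)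
    (k0 k : Fin g) (t : ((k : Fin g) × Fin (m k)) → ℂ) : ℂ :=
  ∏ p : (k : Fin g) × Fin (m k), t p ^ (b k p - b k0 p)

/-- `u(t) = φ(t)/M_{k0}(t)`. -/
def qoU {g : ℕ} (m : Fin g → ℕ) (b : Fin g → ((k : Fin g) × Fin (m k)) → ℕ)
    (f : Fin g → (((k : Fin g) × Fin (m k)) → ℂ) → ℂ) (k0 : Fin g)
    (t : ((k : Fin g) × Fin (m k)) → ℂ) : ℂ :=
  ∑ k, qoN m b k0 k t * f k t

theorem qoPhi_factor {g : ℕ} (m : Fin g → ℕ) (b : Fin g → ((k : Fin g) × Fin (m k)) → ℕ)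
    (f : Fin g → (((k : Fin g) × Fin (m k)) → ℂ) → ℂ) (k0 : Fin g)
    (hmono : ∀ k p, b k0 p ≤ b k p) (t : ((k : Fin g) × Fin (m k)) → ℂ) :
    qoPhi m b f t = qoMonom m b k0 t * qoU m b f k0 t := by
  rw [qoPhi, qoU, Finset.mul_sum]
  refine Finset.sum_congr rfl fun k _ => ?_
  rw [← mul_assoc]
  congr 1
  rw [qoMonom, qoMonom, qoN, ← Finset.prod_mul_distrib]
  refine Finset.prod_congr rfl fun p _ => ?_
  rw [← pow_add, Nat.add_sub_cancel' (hmono k p)]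

theorem qoN_continuous {g : ℕ} (m : Fin g → ℕ) (b : Fin g → ((k : Fin g) × Fin (m k)) → ℕ)
    (k0 k : Fin g) : Continuous (qoN m b k0 k) := by
  exact continuous_finset_prod _ fun p _ => (continuous_apply p).pow _

theorem qoU_tendsto {g : ℕ} (m : Fin g → ℕ) (b : Fin g → ((k : Fin g) × Fin (m k)) → ℕ)
    (f : Fin g → (((k : Fin g) × Fin (m k)) → ℂ) → ℂ) (k0 : Fin g)
    (hf : ∀ k, ContinuousAt (f k) 0)
    (hne : ∀ k, k ≠ k0 → ∃ p, b k0 p < b k p) :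
    Tendsto (qoU m b f k0) (𝓝 0) (𝓝 (f k0 0)) := by
  have hterm : ∀ k, Tendsto (fun t => qoN m b k0 k t * f k t) (𝓝 0)
      (𝓝 (qoN m b k0 k 0 * f k 0)) :=
    fun k => ((qoN_continuous m b k0 k).continuousAt.mul (hf k))
  have hval : ∑ k, qoN m b k0 k 0 * f k 0 = f k0 0 := by
    rw [Finset.sum_eq_single k0]
    · have : qoN m b k0 k0 (0 : ((k : Fin g) × Fin (m k)) → ℂ) = 1 := by
        rw [qoN]
        refine Finset.prod_eq_one fun p _ => ?_
        rw [Nat.sub_self, pow_zero]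
      rw [this, one_mul]
    · intro k _ hk
      obtain ⟨p, hp⟩ := hne k hk
      have : qoN m b k0 k (0 : ((k : Fin g) × Fin (m k)) → ℂ) = 0 := by
        rw [qoN]
        refine Finset.prod_eq_zero (Finset.mem_univ p) ?_
        rw [Pi.zero_apply, zero_pow (Nat.sub_ne_zero_of_lt hp)]
      rw [this, zero_mul]
    · intro h; exact absurd (Finset.mem_univ k0) h
  have := tendsto_finset_sum Finset.univ fun k _ => hterm k
  rw [hval] at this
  exact this

theorem qoMonom_reduce {g : ℕ} (m : Fin g → ℕ) (b : Fin g → ((k : Fin g) × Fin (m k)) → ℕ)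
    (k0 : Fin g) (hz : ∀ p : (k : Fin g) × Fin (m k), p.1 ≠ k0 → b k0 p = 0)
    (t : ((k : Fin g) × Fin (m k)) → ℂ) :
    qoMonom m b k0 t = ∏ j : Fin (m k0), t ⟨k0, j⟩ ^ b k0 ⟨k0, j⟩ := by
  rw [qoMonom, ← Finset.univ_sigma_univ, Finset.prod_sigma]
  rw [Finset.prod_eq_single k0]
  · intro k _ hk
    refine Finset.prod_eq_one fun j _ => ?_
    rw [hz ⟨k, j⟩ hk, pow_zero]
  · intro h; exact absurd (Finset.mem_univ k0) h


theorem my_key_id {g : ℕ} (m : Fin g → ℕ) (b : Fin g → ((k : Fin g) × Fin (m k)) → ℕ)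
    (c : ((k : Fin g) × Fin (m k)) → ℕ)
    (f : Fin g → (((k : Fin g) × Fin (m k)) → ℂ) → ℂ) (k0 : Fin g)
    (cd : ℕ) (d : Fin (m k0) → ℕ)
    (hmono : ∀ k p, b k0 p ≤ b k p)
    (hz : ∀ p : (k : Fin g) × Fin (m k), p.1 ≠ k0 → b k0 p = 0)
    (hrel : ∀ j, cd * b k0 ⟨k0, j⟩ = d j * c ⟨k0, j⟩) (hsumd : ∑ j, d j = cd)
    (t : ((k : Fin g) × Fin (m k)) → ℂ) (s : ℂ) :
    (s * qoPhi m b f t) ^ cd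
      - f k0 0 ^ cd * ∏ j, (s * t ⟨k0, j⟩ ^ c ⟨k0, j⟩) ^ d j
    = (∏ j, (s * t ⟨k0, j⟩ ^ c ⟨k0, j⟩) ^ d j)
        * (qoU m b f k0 t ^ cd - f k0 0 ^ cd) := by
  have h2 : s ^ cd * (qoMonom m b k0 t) ^ cd = ∏ j, (s * t ⟨k0, j⟩ ^ c ⟨k0, j⟩) ^ d j := by
    rw [qoMonom_reduce m b k0 hz, ← Finset.prod_pow, ← hsumd, ← Finset.prod_pow_eq_pow_sum,
      ← Finset.prod_mul_distrib]
    refine Finset.prod_congr rfl fun j _ => ?_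
    rw [mul_pow, ← pow_mul, ← pow_mul, hsumd, mul_comm (b k0 ⟨k0, j⟩) cd, hrel j,
      mul_comm (d j) (c ⟨k0, j⟩)]
  rw [qoPhi_factor m b f k0 hmono, mul_pow s _ cd, mul_pow, ← mul_assoc, h2]
  ring

theorem qo_tangent_cone_of_sum_eq_one
    {g : ℕ} (hg : 0 < g) (m : Fin g → ℕ) (hm : ∀ k, 0 < m k)
    (b : Fin g → ((k : Fin g) × Fin (m k)) → ℕ)
    (c : ((k : Fin g) × Fin (m k)) → ℕ) (hc : ∀ p, 0 < c p)
    (hbpos : ∀ (k : Fin g) (p : (k : Fin g) × Fin (m k)), p.1 ≤ k → 0 < b k p)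
    (hbzero : ∀ (k : Fin g) (p : (k : Fin g) × Fin (m k)), k < p.1 → b k p = 0)
    (hbmono : ∀ (k k' : Fin g) (p : (k : Fin g) × Fin (m k)), k ≤ k' → b k p ≤ b k' p)
    (f : Fin g → (((k : Fin g) × Fin (m k)) → ℂ) → ℂ)
    (hf : ∀ k, AnalyticAt ℂ (f k) 0) (hf0 : ∀ k, f k 0 ≠ 0)
    (heq : ∑ j : Fin (m ⟨0, hg⟩), qoExp m b c ⟨0, hg⟩ ⟨⟨0, hg⟩, j⟩ = 1)
    (cd : ℕ) (d : Fin (m ⟨0, hg⟩) → ℕ)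
    (hd : ∀ j, (cd : ℚ) * qoExp m b c ⟨0, hg⟩ ⟨⟨0, hg⟩, j⟩ = (d j : ℚ))
    (hcd : IsLeast {c' : ℕ | 0 < c' ∧
      ∀ j, ∃ dj : ℕ, (c' : ℚ) * qoExp m b c ⟨0, hg⟩ ⟨⟨0, hg⟩, j⟩ = (dj : ℚ)} cd) :
    ∃ r₀ > (0 : ℝ), ∀ r : ℝ, 0 < r → r ≤ r₀ →
      tangentConeAt ℂ (qoY m b c f r) 0 =
        {q : (((k : Fin g) × Fin (m k)) → ℂ) × ℂ |
          q.2 ^ cd - f ⟨0, hg⟩ 0 ^ cd *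
            ∏ j : Fin (m ⟨0, hg⟩), q.1 ⟨⟨0, hg⟩, j⟩ ^ d j = 0} := by
  classical
  have hk0le : ∀ k : Fin g, (⟨0, hg⟩ : Fin g) ≤ k := fun k => by
    rw [Fin.le_def]; exact Nat.zero_le _
  simp only [qoExp] at hd heq
  have hmono : ∀ k p, b (⟨0, hg⟩ : Fin g) p ≤ b k p := fun k p => hbmono (⟨0, hg⟩ : Fin g) k p (hk0le k)
  have hz : ∀ p : (k : Fin g) × Fin (m k), p.1 ≠ (⟨0, hg⟩ : Fin g) → b (⟨0, hg⟩ : Fin g) p = 0 := fun p hp =>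
    hbzero (⟨0, hg⟩ : Fin g) p (lt_of_le_of_ne (hk0le p.1) (Ne.symm hp))
  have hne : ∀ k, k ≠ (⟨0, hg⟩ : Fin g) → ∃ p : (k : Fin g) × Fin (m k), b (⟨0, hg⟩ : Fin g) p < b k p := by
    intro k hk
    refine ⟨⟨k, ⟨0, hm k⟩⟩, ?_⟩
    have h1 : b (⟨0, hg⟩ : Fin g) ⟨k, ⟨0, hm k⟩⟩ = 0 := hz _ hk
    rw [h1]
    exact hbpos k _ le_rfl
  have hcd0 : 0 < cd := hcd.1.1
  have hcd0Q : ((cd : ℚ)) ≠ 0 := by exact_mod_cast hcd0.ne'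
  have hbb : ∀ j, 0 < b (⟨0, hg⟩ : Fin g) ⟨(⟨0, hg⟩ : Fin g), j⟩ := fun j => hbpos (⟨0, hg⟩ : Fin g) ⟨(⟨0, hg⟩ : Fin g), j⟩ le_rfl
  have hdpos : ∀ j, 0 < d j := by
    intro j
    have hb' : (0 : ℚ) < (b (⟨0, hg⟩ : Fin g) ⟨(⟨0, hg⟩ : Fin g), j⟩ : ℚ) := by exact_mod_cast hbb j
    have hc' : (0 : ℚ) < (c ⟨(⟨0, hg⟩ : Fin g), j⟩ : ℚ) := by exact_mod_cast hc ⟨(⟨0, hg⟩ : Fin g), j⟩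
    have hcd' : (0 : ℚ) < (cd : ℚ) := by exact_mod_cast hcd0
    have h1 : (0 : ℚ) < (d j : ℚ) := by rw [← hd j]; positivity
    exact_mod_cast h1
  have hrel : ∀ j, cd * b (⟨0, hg⟩ : Fin g) ⟨(⟨0, hg⟩ : Fin g), j⟩ = d j * c ⟨(⟨0, hg⟩ : Fin g), j⟩ := by
    intro j
    have hc' : (c ⟨(⟨0, hg⟩ : Fin g), j⟩ : ℚ) ≠ 0 := by exact_mod_cast (hc ⟨(⟨0, hg⟩ : Fin g), j⟩).ne'
    have h2 : (cd : ℚ) * (b (⟨0, hg⟩ : Fin g) ⟨(⟨0, hg⟩ : Fin g), j⟩ : ℚ) = (d j : ℚ) * (c ⟨(⟨0, hg⟩ : Fin g), j⟩ : ℚ) := by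
      have h := hd j
      field_simp at h
      linear_combination h
    exact_mod_cast h2
  have hsumdQ : ∑ j, (d j : ℚ) = (cd : ℚ) := by
    rw [Finset.sum_congr rfl fun j _ => (hd j).symm, ← Finset.mul_sum, heq, mul_one]
  have hsumd : ∑ j, d j = cd := by exact_mod_cast hsumdQ
  have hsumR : ∑ j : Fin (m (⟨0, hg⟩ : Fin g)), (b (⟨0, hg⟩ : Fin g) ⟨(⟨0, hg⟩ : Fin g), j⟩ : ℝ) / (c ⟨(⟨0, hg⟩ : Fin g), j⟩ : ℝ) = 1 := by
    have h := congrArg (fun q : ℚ => (q : ℝ)) heq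
    push_cast at h
    exact h
  -- gcd of the d's is 1, hence a Bezout relation
  have hgcd : ∃ kk : Fin (m (⟨0, hg⟩ : Fin g)) → ℤ, ∑ j, kk j * (d j : ℤ) = 1 := by
    obtain ⟨kk, hkk⟩ := my_finset_gcd_bezout Finset.univ d
    have he1 : Finset.univ.gcd d = 1 := by
      set e := Finset.univ.gcd d with hedef
      by_contra hne1
      have hdvd : ∀ j, e ∣ d j := fun j => Finset.gcd_dvd (Finset.mem_univ j)
      have hecd : e ∣ cd := hsumd ▸ Finset.dvd_sum fun j _ => hdvd j
      have he0 : 0 < e := by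
        rcases Nat.eq_zero_or_pos e with h | h
        · exfalso
          have h1 := hdvd ⟨0, hm (⟨0, hg⟩ : Fin g)⟩
          rw [h] at h1
          exact absurd (Nat.eq_zero_of_zero_dvd h1) (hdpos _).ne'
        · exact h
      have he2 : 2 ≤ e := by omega
      have he0' : (e : ℚ) ≠ 0 := by exact_mod_cast he0.ne'
      have hmem : (cd / e) ∈ {c' : ℕ | 0 < c' ∧
          ∀ j, ∃ dj : ℕ, (c' : ℚ) * ((b (⟨0, hg⟩ : Fin g) ⟨(⟨0, hg⟩ : Fin g), j⟩ : ℚ) / (c ⟨(⟨0, hg⟩ : Fin g), j⟩ : ℚ)) = (dj : ℚ)} := by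
        constructor
        · exact Nat.div_pos (Nat.le_of_dvd hcd0 hecd) he0
        · intro j
          refine ⟨d j / e, ?_⟩
          have hcast1 : ((cd / e : ℕ) : ℚ) = (cd : ℚ) / e := Nat.cast_div hecd he0'
          have hcast2 : ((d j / e : ℕ) : ℚ) = (d j : ℚ) / e := Nat.cast_div (hdvd j) he0'
          have hda : ((b (⟨0, hg⟩ : Fin g) ⟨(⟨0, hg⟩ : Fin g), j⟩ : ℚ) / (c ⟨(⟨0, hg⟩ : Fin g), j⟩ : ℚ)) = (d j : ℚ) / cd := by
            rw [eq_div_iff hcd0Q]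
            linear_combination hd j
          rw [hcast1, hcast2, hda]
          field_simp
      have hle := hcd.2 hmem
      have hlt : cd / e < cd := Nat.div_lt_self hcd0 he2
      exact absurd hle (not_le.mpr hlt)
    rw [he1] at hkk
    exact ⟨kk, by exact_mod_cast hkk⟩
  refine ⟨1, one_pos, fun r hr _ => ?_⟩
  ext v
  simp only [Set.mem_setOf_eq]
  constructor
  · -- tangent cone ⊆ zero set
    intro hv'
    obtain ⟨s, q, hsn, hmemY, hlim⟩ := (mem_tangentConeAt_iff_exists_seq_norm_tendsto_atTop (𝕜 := ℂ)).1 hv'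
    rw [eventually_atTop] at hmemY
    obtain ⟨N, hN⟩ := hmemY
    have hsn' : Tendsto (fun n => ‖s (n + N)‖) atTop atTop :=
      hsn.comp (tendsto_add_atTop_nat N)
    have hlim' : Tendsto (fun n => s (n + N) • q (n + N)) atTop (𝓝 v) :=
      hlim.comp (tendsto_add_atTop_nat N)
    have hex : ∀ n, ∃ t : ((k : Fin g) × Fin (m k)) → ℂ,
        (∀ p, ‖t p‖ < r) ∧ (fun p => t p ^ c p, qoPhi m b f t) = q (n + N) := by
      intro n
      have h1 := hN (n + N) (Nat.le_add_left N n)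
      rw [zero_add] at h1
      obtain ⟨t, ht1, ht2⟩ := h1
      exact ⟨t, ht1, ht2⟩
    choose t ht1 ht2 using hex
    have hq0 : Tendsto (fun n => q (n + N)) atTop (𝓝 0) :=
      tangentConeAt.lim_zero atTop hsn' hlim'
    have hq1 : Tendsto (fun n => (q (n + N)).1) atTop (𝓝 0) := by
      have h1 := (continuous_fst.tendsto (0 : (((k : Fin g) × Fin (m k)) → ℂ) × ℂ)).comp hq0
      simpa [Function.comp_def] using h1
    have htt : Tendsto t atTop (𝓝 0) := by
      rw [tendsto_pi_nhds]
      intro p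
      have hpow : Tendsto (fun n => (t n p) ^ c p) atTop (𝓝 0) := by
        have h1 := ((continuous_apply p).tendsto
          (0 : ((k : Fin g) × Fin (m k)) → ℂ)).comp hq1
        simp only [Pi.zero_apply] at h1
        refine h1.congr fun n => ?_
        simp only [Function.comp_apply]
        rw [← ht2 n]
      have habs : Tendsto (fun n => ‖t n p‖) atTop (𝓝 0) := by
        apply my_tendsto_zero_of_pow (fun n => norm_nonneg _) (hc p)
        have h1 := (continuous_norm.tendsto (0 : ℂ)).comp hpow
        simpa [Function.comp_def, norm_pow] using h1
      simp only [Pi.zero_apply]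
      rw [tendsto_zero_iff_norm_tendsto_zero]
      simpa using habs
    have hu : Tendsto (fun n => qoU m b f (⟨0, hg⟩ : Fin g) (t n)) atTop (𝓝 (f (⟨0, hg⟩ : Fin g) 0)) :=
      (qoU_tendsto m b f (⟨0, hg⟩ : Fin g) (fun k => (hf k).continuousAt) hne).comp htt
    have hkey : ∀ n, (s (n + N) • q (n + N)).2 ^ cd
        - f (⟨0, hg⟩ : Fin g) 0 ^ cd * ∏ j, (s (n + N) • q (n + N)).1 ⟨(⟨0, hg⟩ : Fin g), j⟩ ^ d j
        = (∏ j, (s (n + N) • q (n + N)).1 ⟨(⟨0, hg⟩ : Fin g), j⟩ ^ d j)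
            * (qoU m b f (⟨0, hg⟩ : Fin g) (t n) ^ cd - f (⟨0, hg⟩ : Fin g) 0 ^ cd) := by
      intro n
      rw [← ht2 n]
      exact my_key_id m b c f (⟨0, hg⟩ : Fin g) cd d hmono hz hrel hsumd (t n) (s (n + N))
    have hcontG : Continuous (fun q : (((k : Fin g) × Fin (m k)) → ℂ) × ℂ =>
        ∏ j, q.1 ⟨(⟨0, hg⟩ : Fin g), j⟩ ^ d j) :=
      continuous_finset_prod _ fun j _ =>
        ((continuous_apply (⟨(⟨0, hg⟩ : Fin g), j⟩ : (k : Fin g) × Fin (m k))).comp continuous_fst).pow _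
    have hcontF : Continuous (fun q : (((k : Fin g) × Fin (m k)) → ℂ) × ℂ =>
        q.2 ^ cd - f (⟨0, hg⟩ : Fin g) 0 ^ cd * ∏ j, q.1 ⟨(⟨0, hg⟩ : Fin g), j⟩ ^ d j) :=
      (continuous_snd.pow cd).sub (continuous_const.mul hcontG)
    have hL : Tendsto (fun n => (s (n + N) • q (n + N)).2 ^ cd
        - f (⟨0, hg⟩ : Fin g) 0 ^ cd * ∏ j, (s (n + N) • q (n + N)).1 ⟨(⟨0, hg⟩ : Fin g), j⟩ ^ d j) atTop
        (𝓝 (v.2 ^ cd - f (⟨0, hg⟩ : Fin g) 0 ^ cd * ∏ j, v.1 ⟨(⟨0, hg⟩ : Fin g), j⟩ ^ d j)) :=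
      (hcontF.tendsto v).comp hlim'
    have hR : Tendsto (fun n => (∏ j, (s (n + N) • q (n + N)).1 ⟨(⟨0, hg⟩ : Fin g), j⟩ ^ d j)
        * (qoU m b f (⟨0, hg⟩ : Fin g) (t n) ^ cd - f (⟨0, hg⟩ : Fin g) 0 ^ cd)) atTop
        (𝓝 ((∏ j, v.1 ⟨(⟨0, hg⟩ : Fin g), j⟩ ^ d j) * (f (⟨0, hg⟩ : Fin g) 0 ^ cd - f (⟨0, hg⟩ : Fin g) 0 ^ cd))) :=
      ((hcontG.tendsto v).comp hlim').mul ((hu.pow cd).sub tendsto_const_nhds)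
    have hfin := tendsto_nhds_unique hL (hR.congr fun n => (hkey n).symm)
    rw [sub_self, mul_zero] at hfin
    exact hfin
  · -- zero set ⊆ tangent cone
    intro hv
    have hy : v.2 ^ cd = f (⟨0, hg⟩ : Fin g) 0 ^ cd * ∏ j, v.1 ⟨(⟨0, hg⟩ : Fin g), j⟩ ^ d j := sub_eq_zero.mp hv
    obtain ⟨ww, hww1, hww2⟩ := my_roots_choice (fun j => c ⟨(⟨0, hg⟩ : Fin g), j⟩) (fun j => b (⟨0, hg⟩ : Fin g) ⟨(⟨0, hg⟩ : Fin g), j⟩)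
      d cd hcd0 (fun j => hc _) hbb hdpos hrel hgcd (fun j => v.1 ⟨(⟨0, hg⟩ : Fin g), j⟩) v.2 (f (⟨0, hg⟩ : Fin g) 0)
      (hf0 (⟨0, hg⟩ : Fin g)) hy
    have hw0 : ∀ p : (k : Fin g) × Fin (m k), ∃ z : ℂ, z ^ c p = v.1 p :=
      fun p => IsAlgClosed.exists_pow_nat_eq _ (hc p)
    choose w0 hw0x using hw0
    set w : ((k : Fin g) × Fin (m k)) → ℂ := fun p =>
      if h : p.1 = (⟨0, hg⟩ : Fin g) then ww (Fin.cast (congrArg m h) p.2) else w0 p with hwdef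
    have hwk0 : ∀ j : Fin (m (⟨0, hg⟩ : Fin g)), w ⟨(⟨0, hg⟩ : Fin g), j⟩ = ww j := by
      intro j
      simp [hwdef]
    have hwpow : ∀ p, w p ^ c p = v.1 p := by
      rintro ⟨k, j⟩
      by_cases h : k = (⟨0, hg⟩ : Fin g)
      · subst h
        rw [hwk0 j]
        exact hww1 j
      · simp only [hwdef, dif_neg h]
        exact hw0x ⟨k, j⟩
    have hwprod : f (⟨0, hg⟩ : Fin g) 0 * ∏ j, w ⟨(⟨0, hg⟩ : Fin g), j⟩ ^ b (⟨0, hg⟩ : Fin g) ⟨(⟨0, hg⟩ : Fin g), j⟩ = v.2 := by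
      rw [Finset.prod_congr rfl fun j _ => by rw [hwk0 j]]
      exact hww2
    set W : ℂ := ∏ j, ww j ^ b (⟨0, hg⟩ : Fin g) ⟨(⟨0, hg⟩ : Fin g), j⟩ with hWdef
    set T : ℕ → ((k : Fin g) × Fin (m k)) → ℂ :=
      fun n p => ((((n : ℝ) + 1) ^ (-((c p : ℝ))⁻¹) : ℝ) : ℂ) * w p with hTdef
    set C : ℕ → ℂ := fun n => ((n : ℂ) + 1) with hCdef
    have hCne : ∀ n : ℕ, C n ≠ 0 := by
      intro n
      simp only [hCdef]
      exact_mod_cast Nat.succ_ne_zero n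
    have hn1pos : ∀ n : ℕ, (0 : ℝ) < (n : ℝ) + 1 := fun n => by positivity
    -- decay of T
    have habs : ∀ p, Tendsto (fun n => ‖T n p‖) atTop (𝓝 0) := by
      intro p
      have h1 : Tendsto (fun n : ℕ => ((n : ℝ) + 1) ^ (-((c p : ℝ))⁻¹)) atTop (𝓝 0) :=
        (tendsto_rpow_neg_atTop (by
          have := hc p
          positivity)).comp
          (tendsto_atTop_add_const_right atTop 1 tendsto_natCast_atTop_atTop)
      have h2 : Tendsto (fun n : ℕ => ((n : ℝ) + 1) ^ (-((c p : ℝ))⁻¹) * ‖w p‖)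
          atTop (𝓝 0) := by
        simpa using h1.mul_const (‖w p‖)
      refine h2.congr fun n => ?_
      simp only [hTdef]
      simp only [norm_mul, Complex.norm_real, Real.norm_eq_abs,
        abs_of_nonneg (Real.rpow_nonneg (hn1pos n).le _)]
    have hT0 : Tendsto T atTop (𝓝 0) := by
      rw [tendsto_pi_nhds]
      intro p
      simp only [Pi.zero_apply]
      rw [tendsto_zero_iff_norm_tendsto_zero]
      simpa using habs p
    have hu2 : Tendsto (fun n => qoU m b f (⟨0, hg⟩ : Fin g) (T n)) atTop (𝓝 (f (⟨0, hg⟩ : Fin g) 0)) :=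
      (qoU_tendsto m b f (⟨0, hg⟩ : Fin g) (fun k => (hf k).continuousAt) hne).comp hT0
    -- first coordinates are exactly v.1
    have hfst : ∀ n p, C n * (T n p) ^ c p = v.1 p := by
      intro n p
      have hcR : ((c p : ℝ)) ≠ 0 := by exact_mod_cast (hc p).ne'
      have hpow : ((((n : ℝ) + 1) ^ (-((c p : ℝ))⁻¹)) ^ (c p : ℕ)) = ((n : ℝ) + 1)⁻¹ := by
        rw [← Real.rpow_natCast ((((n : ℝ) + 1) ^ (-((c p : ℝ))⁻¹))) (c p),
          ← Real.rpow_mul (hn1pos n).le, neg_mul, inv_mul_cancel₀ hcR, Real.rpow_neg_one]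
      have h1 : (T n p) ^ c p = ((((n : ℝ) + 1)⁻¹ : ℝ) : ℂ) * v.1 p := by
        simp only [hTdef]
        rw [mul_pow, ← Complex.ofReal_pow, hpow, hwpow p]
      rw [h1]
      have h3 : ((((n : ℝ) + 1)⁻¹ : ℝ) : ℂ) = ((n : ℂ) + 1)⁻¹ := by push_cast; ring
      rw [h3]
      simp only [hCdef]
      rw [← mul_assoc, mul_inv_cancel₀ (hCne n), one_mul]
    -- second coordinate
    have hsnd : ∀ n, C n * qoPhi m b f (T n) = W * qoU m b f (⟨0, hg⟩ : Fin g) (T n) := by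
      intro n
      rw [qoPhi_factor m b f (⟨0, hg⟩ : Fin g) hmono, qoMonom_reduce m b (⟨0, hg⟩ : Fin g) hz]
      have hM : (∏ j, (T n ⟨(⟨0, hg⟩ : Fin g), j⟩) ^ b (⟨0, hg⟩ : Fin g) ⟨(⟨0, hg⟩ : Fin g), j⟩)
          = ((((n : ℝ) + 1)⁻¹ : ℝ) : ℂ) * W := by
        have h1 : ∀ j : Fin (m (⟨0, hg⟩ : Fin g)), (T n ⟨(⟨0, hg⟩ : Fin g), j⟩) ^ b (⟨0, hg⟩ : Fin g) ⟨(⟨0, hg⟩ : Fin g), j⟩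
            = ((( ((n : ℝ) + 1) ^ (-((c ⟨(⟨0, hg⟩ : Fin g), j⟩ : ℝ))⁻¹ * (b (⟨0, hg⟩ : Fin g) ⟨(⟨0, hg⟩ : Fin g), j⟩ : ℝ)) ) : ℝ) : ℂ)
              * ww j ^ b (⟨0, hg⟩ : Fin g) ⟨(⟨0, hg⟩ : Fin g), j⟩ := by
          intro j
          simp only [hTdef]
          rw [hwk0 j, mul_pow, ← Complex.ofReal_pow,
            ← Real.rpow_natCast (((n : ℝ) + 1) ^ (-((c ⟨(⟨0, hg⟩ : Fin g), j⟩ : ℝ))⁻¹)) (b (⟨0, hg⟩ : Fin g) ⟨(⟨0, hg⟩ : Fin g), j⟩),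
            ← Real.rpow_mul (hn1pos n).le]
        rw [Finset.prod_congr rfl fun j _ => h1 j, Finset.prod_mul_distrib,
          ← Complex.ofReal_prod, ← Real.rpow_sum_of_pos (hn1pos n)]
        have h2 : ∑ j : Fin (m (⟨0, hg⟩ : Fin g)), (-((c ⟨(⟨0, hg⟩ : Fin g), j⟩ : ℝ))⁻¹ * (b (⟨0, hg⟩ : Fin g) ⟨(⟨0, hg⟩ : Fin g), j⟩ : ℝ)) = -1 := by
          have h3 : ∀ j : Fin (m (⟨0, hg⟩ : Fin g)), (-((c ⟨(⟨0, hg⟩ : Fin g), j⟩ : ℝ))⁻¹ * (b (⟨0, hg⟩ : Fin g) ⟨(⟨0, hg⟩ : Fin g), j⟩ : ℝ))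
              = -((b (⟨0, hg⟩ : Fin g) ⟨(⟨0, hg⟩ : Fin g), j⟩ : ℝ) / (c ⟨(⟨0, hg⟩ : Fin g), j⟩ : ℝ)) := fun j => by ring
          rw [Finset.sum_congr rfl fun j _ => h3 j, Finset.sum_neg_distrib, hsumR]
        rw [h2, Real.rpow_neg_one, hWdef]
      rw [hM]
      have h3 : ((((n : ℝ) + 1)⁻¹ : ℝ) : ℂ) = ((n : ℂ) + 1)⁻¹ := by push_cast; ring
      rw [h3]
      simp only [hCdef]
      have h4 : ((n : ℂ) + 1) ≠ 0 := by exact_mod_cast Nat.succ_ne_zero n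
      field_simp
    refine (mem_tangentConeAt_iff_exists_seq_norm_tendsto_atTop (𝕜 := ℂ)).2 ⟨C, fun n => (fun p => T n p ^ c p, qoPhi m b f (T n)), ?_, ?_, ?_⟩
    swap
    · have hTmem : ∀ᶠ n in atTop, ∀ p, ‖T n p‖ < r := by
        rw [eventually_all]
        intro p
        exact (habs p).eventually (gt_mem_nhds hr)
      filter_upwards [hTmem] with n hn
      rw [zero_add]
      exact Set.mem_image_of_mem _ hn
    · have h4 : (fun n => ‖C n‖) = fun n : ℕ => ((n : ℝ) + 1) := by
        funext n
        simp only [hCdef]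
        have h5 : ((n : ℂ) + 1) = ((n + 1 : ℕ) : ℂ) := by push_cast; ring
        rw [h5, Complex.norm_natCast]
        push_cast
        ring
      rw [h4]
      exact tendsto_atTop_add_const_right atTop 1 tendsto_natCast_atTop_atTop
    · have hmain : Tendsto (fun n => ((fun p => C n * (T n p ^ c p) : _ → ℂ),
          C n * qoPhi m b f (T n))) atTop (𝓝 (v.1, v.2)) := by
        apply Tendsto.prodMk_nhds
        · have h5 : ∀ n, (fun p => C n * (T n p ^ c p)) = v.1 := by
            intro n
            funext p
            exact hfst n p
          exact (tendsto_const_nhds : Tendsto (fun _ : ℕ => v.1) atTop (𝓝 v.1)).congr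
            fun n => (h5 n).symm
        · have h6 : Tendsto (fun n => W * qoU m b f (⟨0, hg⟩ : Fin g) (T n)) atTop (𝓝 (W * f (⟨0, hg⟩ : Fin g) 0)) :=
            tendsto_const_nhds.mul hu2
          have h7 : W * f (⟨0, hg⟩ : Fin g) 0 = v.2 := by rw [mul_comm]; exact hww2
          rw [h7] at h6
          exact h6.congr fun n => (hsnd n).symm
      have h8 : (fun n => C n • ((fun p => T n p ^ c p, qoPhi m b f (T n))
          : (((k : Fin g) × Fin (m k)) → ℂ) × ℂ))
          = fun n => ((fun p => C n * (T n p ^ c p) : _ → ℂ), C n * qoPhi m b f (T n)) := by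
        funext n
        rfl
      rw [h8]
      simpa using hmain

end
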